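/- Let Γ be an abelian group and R a unital Γ-graded ring. Then the following are equivalent: (1) every homogeneous left ideal of R is projective as a left R-module; (2) for every Γ-graded left R-module P that is projective as a left R-module, every homogeneous submodule of P is projective as a left R-module. -/

import Mathlib

set_option linter.unusedSectionVars false
set_option synthInstance.maxHeartbeats 1000000
set_option maxHeartbeats 2000000

open DirectSum

section HComp

universe w u v

variable {Γ : Type w} [AddCommGroup Γ] [DecidableEq Γ]
variable {R : Type u} [Ring R] (𝒜 : Γ → AddSubgroup R) [GradedRing 𝒜]

theorem aux_decompose_mul {a : R} {i : Γ} (ha : a ∈ 𝒜 i) (b : R) (j : Γ) :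
    (DirectSum.decompose 𝒜 (a * b) (i + j) : R) = a * (DirectSum.decompose 𝒜 b j : R) := by
  induction b using DirectSum.Decomposition.inductionOn 𝒜 with
  | zero => simp
  | @homogeneous δ m =>
      by_cases hj : j = δ
      · subst hj
        rw [DirectSum.decompose_of_mem_same 𝒜 (SetLike.mul_mem_graded ha m.2),
          DirectSum.decompose_of_mem_same 𝒜 m.2]
      · rw [DirectSum.decompose_of_mem_ne 𝒜 (SetLike.mul_mem_graded ha m.2)
          (fun h => hj (add_left_cancel h).symm),
          DirectSum.decompose_of_mem_ne 𝒜 m.2 (Ne.symm hj), mul_zero]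
  | add b c hb hc =>
      rw [mul_add, DirectSum.decompose_add, DirectSum.add_apply, AddSubgroup.coe_add, hb, hc,
        DirectSum.decompose_add, DirectSum.add_apply, AddSubgroup.coe_add, mul_add]

variable {ι : Type v} (d : ι → Γ)

/-- The degree-`γ` homogeneous component of an element of the graded free module
`ι →₀ R` whose basis element `i` sits in degree `d i`. -/
noncomputable def hcomp (γ : Γ) (f : ι →₀ R) : ι →₀ R :=
  Finsupp.onFinset f.support (fun i => (DirectSum.decompose 𝒜 (f i) (γ - d i) : R))
    (fun i h => by
      rw [Finsupp.mem_support_iff]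
      intro h0
      exact h (by simp only [h0]; simp))

theorem hcomp_apply (γ : Γ) (f : ι →₀ R) (i : ι) :
    hcomp 𝒜 d γ f i = (DirectSum.decompose 𝒜 (f i) (γ - d i) : R) := rfl

theorem hcomp_add (γ : Γ) (f g : ι →₀ R) :
    hcomp 𝒜 d γ (f + g) = hcomp 𝒜 d γ f + hcomp 𝒜 d γ g := by
  ext i
  simp [hcomp_apply]

theorem hcomp_zero (γ : Γ) : hcomp 𝒜 d γ (0 : ι →₀ R) = 0 := by
  ext i; simp [hcomp_apply]

theorem hcomp_smul {r : R} {α : Γ} (hr : r ∈ 𝒜 α) (γ : Γ) (f : ι →₀ R) :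
    hcomp 𝒜 d (α + γ) (r • f) = r • hcomp 𝒜 d γ f := by
  ext i
  rw [hcomp_apply, Finsupp.smul_apply, Finsupp.smul_apply, hcomp_apply, smul_eq_mul,
    smul_eq_mul, add_sub_assoc, aux_decompose_mul 𝒜 hr]

theorem hcomp_hcomp_same (γ : Γ) (f : ι →₀ R) :
    hcomp 𝒜 d γ (hcomp 𝒜 d γ f) = hcomp 𝒜 d γ f := by
  ext i
  rw [hcomp_apply, hcomp_apply, DirectSum.decompose_of_mem_same 𝒜 (SetLike.coe_mem _)]

theorem hcomp_hcomp_ne {γ γ' : Γ} (h : γ ≠ γ') (f : ι →₀ R) :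
    hcomp 𝒜 d γ (hcomp 𝒜 d γ' f) = 0 := by
  ext i
  rw [hcomp_apply, hcomp_apply,
    DirectSum.decompose_of_mem_ne 𝒜 (SetLike.coe_mem _)
      (fun hh => h (by have := sub_left_inj.mp hh; exact this.symm)),
    Finsupp.zero_apply]

theorem support_hcomp (γ : Γ) (f : ι →₀ R) : (hcomp 𝒜 d γ f).support ⊆ f.support :=
  Finsupp.support_onFinset_subset

theorem hcomp_single (γ : Γ) (i : ι) (r : R) :
    hcomp 𝒜 d γ (Finsupp.single i r) =
      Finsupp.single i (DirectSum.decompose 𝒜 r (γ - d i) : R) := by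
  ext j
  rw [hcomp_apply]
  by_cases h : i = j
  · subst h; simp
  · simp [Finsupp.single_eq_of_ne' h]

/-- `hcomp` as an `AddMonoidHom`. -/
noncomputable def hcompHom (γ : Γ) : (ι →₀ R) →+ (ι →₀ R) :=
  AddMonoidHom.mk' (hcomp 𝒜 d γ) (hcomp_add 𝒜 d γ)

end HComp

open DirectSum

section Splitting

universe w u v

variable {Γ : Type w} [AddCommGroup Γ] [DecidableEq Γ]
variable {R : Type u} [Ring R] (𝒜 : Γ → AddSubgroup R) [GradedRing 𝒜]
variable {P : Type v} [AddCommGroup P] [Module R P] (ℳ : Γ → AddSubgroup P)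
  [DirectSum.Decomposition ℳ]

/-- The index type of a homogeneous generating family of `P`. -/
abbrev GIdx := Σ γ : Γ, ℳ γ

/-- Degrees of the generators. -/
def gdeg : GIdx ℳ → Γ := Sigma.fst

/-- The canonical graded surjection from the graded free module onto `P`. -/
noncomputable def gπ : (GIdx ℳ →₀ R) →ₗ[R] P :=
  Finsupp.linearCombination R fun i => (i.2 : P)

theorem gπ_single (i : GIdx ℳ) (r : R) : gπ (R := R) ℳ (Finsupp.single i r) = r • (i.2 : P) := by
  simp [gπ]

theorem gπ_surjective : Function.Surjective (gπ (R := R) ℳ) := by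
  classical
  intro p
  have : p ∈ LinearMap.range (gπ (R := R) ℳ) := by
    rw [← DirectSum.sum_support_decompose ℳ p]
    refine sum_mem fun γ _ => ⟨Finsupp.single ⟨γ, DirectSum.decompose ℳ p γ⟩ 1, ?_⟩
    rw [gπ_single, one_smul]
  exact this

section withSmul

variable (hsm : ∀ (γ δ : Γ), ∀ r ∈ 𝒜 γ, ∀ p ∈ ℳ δ, r • p ∈ ℳ (γ + δ))

include hsm

theorem decompose_smul_of_mem {p : P} {δ : Γ} (hp : p ∈ ℳ δ) (r : R) (γ : Γ) :
    (DirectSum.decompose ℳ (r • p) γ : P) = (DirectSum.decompose 𝒜 r (γ - δ) : R) • p := by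
  induction r using DirectSum.Decomposition.inductionOn 𝒜 with
  | zero => simp
  | @homogeneous β m =>
      by_cases hγ : γ = β + δ
      · subst hγ
        rw [DirectSum.decompose_of_mem_same ℳ (hsm β δ m m.2 p hp), add_sub_cancel_right,
          DirectSum.decompose_of_mem_same 𝒜 m.2]
      · rw [DirectSum.decompose_of_mem_ne ℳ (hsm β δ m m.2 p hp) (fun h => hγ h.symm),
          DirectSum.decompose_of_mem_ne 𝒜 m.2
            (fun h => hγ (by rw [← sub_eq_iff_eq_add.mp h.symm])),
          zero_smul]
  | add a b ha hb =>
      rw [add_smul, DirectSum.decompose_add, DirectSum.add_apply, AddSubgroup.coe_add, ha, hb,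
        DirectSum.decompose_add, DirectSum.add_apply, AddSubgroup.coe_add, add_smul]

theorem gπ_hcomp (γ : Γ) (f : GIdx ℳ →₀ R) :
    gπ ℳ (hcomp 𝒜 (gdeg ℳ) γ f) = (DirectSum.decompose ℳ (gπ ℳ f) γ : P) := by
  induction f using Finsupp.induction_linear with
  | zero => rw [hcomp_zero]; simp
  | add f g hf hg =>
      rw [hcomp_add, map_add, hf, hg, map_add, DirectSum.decompose_add, DirectSum.add_apply,
        AddSubgroup.coe_add]
  | single i r =>
      rw [hcomp_single, gπ_single, gπ_single,
        decompose_smul_of_mem 𝒜 ℳ hsm (SetLike.coe_mem i.2) r γ]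
      rfl

end withSmul

end Splitting

open DirectSum

section Homogenize

universe w u v

variable {Γ : Type w} [AddCommGroup Γ] [DecidableEq Γ]
variable {R : Type u} [Ring R] (𝒜 : Γ → AddSubgroup R) [GradedRing 𝒜]
variable {P : Type v} [AddCommGroup P] [Module R P] (ℳ : Γ → AddSubgroup P)
  [DirectSum.Decomposition ℳ]

/-- Homogenization (degree-zero part) of a not-necessarily-graded linear map
`P → (GIdx ℳ →₀ R)`, as an `AddMonoidHom`. -/
noncomputable def hgz (s : P →ₗ[R] (GIdx ℳ →₀ R)) : P →+ (GIdx ℳ →₀ R) :=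
  (DirectSum.toAddMonoid fun γ =>
    (hcompHom 𝒜 (gdeg ℳ) γ).comp (s.toAddMonoidHom.comp (ℳ γ).subtype)).comp
    (DirectSum.decomposeAddEquiv ℳ).toAddMonoidHom

theorem hgz_of_mem (s : P →ₗ[R] (GIdx ℳ →₀ R)) {γ : Γ} {p : P} (hp : p ∈ ℳ γ) :
    hgz 𝒜 ℳ s p = hcomp 𝒜 (gdeg ℳ) γ (s p) := by
  have h1 : (DirectSum.decomposeAddEquiv ℳ) p = DirectSum.of (fun γ => ℳ γ) γ ⟨p, hp⟩ :=
    DirectSum.decompose_of_mem ℳ hp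
  rw [hgz, AddMonoidHom.comp_apply, AddEquiv.coe_toAddMonoidHom, h1,
    DirectSum.toAddMonoid_of]
  rfl

section withSmul

variable (hsm : ∀ (γ δ : Γ), ∀ r ∈ 𝒜 γ, ∀ p ∈ ℳ δ, r • p ∈ ℳ (γ + δ))

include hsm

theorem hgz_smul (s : P →ₗ[R] (GIdx ℳ →₀ R)) (r : R) (p : P) :
    hgz 𝒜 ℳ s (r • p) = r • hgz 𝒜 ℳ s p := by
  induction p using DirectSum.Decomposition.inductionOn ℳ with
  | zero => rw [smul_zero, map_zero, smul_zero]
  | @homogeneous δ m =>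
      induction r using DirectSum.Decomposition.inductionOn 𝒜 with
      | zero => rw [zero_smul, map_zero, zero_smul]
      | @homogeneous β a =>
          rw [hgz_of_mem 𝒜 ℳ s (hsm β δ a a.2 m m.2), map_smul,
            hcomp_smul 𝒜 (gdeg ℳ) a.2, hgz_of_mem 𝒜 ℳ s m.2]
      | add a b ha hb => rw [add_smul, map_add, ha, hb, add_smul]
  | add p q hp hq => rw [smul_add, map_add, map_add, hp, hq, smul_add]

/-- The homogenized splitting map as a linear map. -/
noncomputable def hgzL (s : P →ₗ[R] (GIdx ℳ →₀ R)) : P →ₗ[R] (GIdx ℳ →₀ R) :=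
  { toFun := hgz 𝒜 ℳ s
    map_add' := map_add _
    map_smul' := hgz_smul 𝒜 ℳ hsm s }

theorem gπ_hgzL (s : P →ₗ[R] (GIdx ℳ →₀ R)) (hs : ∀ p, gπ (R := R) ℳ (s p) = p) (p : P) :
    gπ (R := R) ℳ (hgzL 𝒜 ℳ hsm s p) = p := by
  show gπ (R := R) ℳ (hgz 𝒜 ℳ s p) = p
  induction p using DirectSum.Decomposition.inductionOn ℳ with
  | zero => rw [map_zero, map_zero]
  | @homogeneous δ m =>
      rw [hgz_of_mem 𝒜 ℳ s m.2, gπ_hcomp 𝒜 ℳ hsm, hs,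
        DirectSum.decompose_of_mem_same ℳ m.2]
  | add p q hp hq => rw [map_add, map_add, hp, hq]

theorem hcomp_hgzL (s : P →ₗ[R] (GIdx ℳ →₀ R)) (x : P) (γ : Γ) :
    hcomp 𝒜 (gdeg ℳ) γ (hgzL 𝒜 ℳ hsm s x) =
      hgzL 𝒜 ℳ hsm s ((DirectSum.decompose ℳ x γ : ℳ γ) : P) := by
  show hcomp 𝒜 (gdeg ℳ) γ (hgz 𝒜 ℳ s x) = hgz 𝒜 ℳ s _
  induction x using DirectSum.Decomposition.inductionOn ℳ with
  | zero => rw [map_zero, hcomp_zero, DirectSum.decompose_zero]; simp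
  | @homogeneous δ m =>
      rw [hgz_of_mem 𝒜 ℳ s m.2]
      by_cases hγ : γ = δ
      · subst hγ
        rw [hcomp_hcomp_same, DirectSum.decompose_of_mem_same ℳ m.2,
          hgz_of_mem 𝒜 ℳ s m.2]
      · rw [hcomp_hcomp_ne 𝒜 (gdeg ℳ) hγ, DirectSum.decompose_of_mem_ne ℳ m.2 (Ne.symm hγ),
          map_zero]
  | add p q hp hq =>
      rw [map_add, hcomp_add, hp, hq, DirectSum.decompose_add, DirectSum.add_apply,
        AddSubgroup.coe_add, map_add]

end withSmul

end Homogenize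

open DirectSum

section Engine

universe w u v

variable {Γ : Type w} [AddCommGroup Γ] [DecidableEq Γ]
variable {R : Type u} [Ring R] (𝒜 : Γ → AddSubgroup R) [GradedRing 𝒜]

theorem engine_ordered {ι : Type v} [LinearOrder ι] [WellFoundedLT ι] (d : ι → Γ)
    (H1 : ∀ I : Ideal R,
      (∀ x ∈ I, ∀ γ : Γ, ((DirectSum.decompose 𝒜 x γ : 𝒜 γ) : R) ∈ I) →
      Module.Projective R I)
    (M : Submodule R (ι →₀ R)) (hM : ∀ f ∈ M, ∀ γ : Γ, hcomp 𝒜 d γ f ∈ M) :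
    Module.Projective R M := by
  classical
  set S : ι → Submodule R (ι →₀ R) := fun i => Finsupp.supported R R {j | j ≤ i} with hS
  set Msub : ι → Submodule R (ι →₀ R) := fun i => M ⊓ S i with hMsub
  set I : ι → Ideal R := fun i => (Msub i).map (Finsupp.lapply i) with hI
  -- homogeneity of the ideals
  have hIhom : ∀ i, ∀ x ∈ I i, ∀ γ : Γ, ((DirectSum.decompose 𝒜 x γ : 𝒜 γ) : R) ∈ I i := by
    rintro i x ⟨f, ⟨hfM, hfS⟩, rfl⟩ γ
    refine ⟨hcomp 𝒜 d (γ + d i) f, ⟨hM f hfM _, ?_⟩, ?_⟩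
    · simp only [SetLike.mem_coe, Finsupp.mem_supported] at hfS ⊢
      exact Set.Subset.trans (Finset.coe_subset.2 (support_hcomp 𝒜 d _ f)) hfS
    · show hcomp 𝒜 d (γ + d i) f i = _
      rw [hcomp_apply, add_sub_cancel_right]
      rfl
  haveI hproj : ∀ i, Module.Projective R (I i) := fun i => H1 _ (hIhom i)
  -- the splittings
  have hτ : ∀ i, ∃ σ : I i →ₗ[R] Msub i,
      ∀ a : I i, ((σ a : ι →₀ R)) i = (a : R) := by
    intro i
    set τ : Msub i →ₗ[R] I i :=
      (Finsupp.lapply i).restrict (fun f hf => Submodule.mem_map_of_mem hf) with hτdef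
    have hτsurj : Function.Surjective τ := by
      rintro ⟨x, f, hf, rfl⟩
      exact ⟨⟨f, hf⟩, rfl⟩
    obtain ⟨σ, hσ⟩ := Module.projective_lifting_property τ LinearMap.id hτsurj
    refine ⟨σ, fun a => ?_⟩
    have := congrArg (fun z : I i => (z : R)) (LinearMap.ext_iff.mp hσ a)
    exact this
  choose σ hσ using hτ
  -- the assembled map
  set Φ : (⨁ i, I i) →ₗ[R] M :=
    DirectSum.toModule R ι M (fun i => (Submodule.inclusion inf_le_left).comp (σ i)) with hΦ
  have hΦof : ∀ i (a : I i), ((Φ (DirectSum.of _ i a) : M) : ι →₀ R) = (σ i a : ι →₀ R) := by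
    intro i a
    rw [hΦ, ← DirectSum.lof_eq_of R, DirectSum.toModule_lof]
    rfl
  have hσS : ∀ i (a : I i), ∀ j, ¬ j ≤ i → ((σ i a : ι →₀ R)) j = 0 := by
    intro i a j hj
    have hmem : ((σ i a : ι →₀ R)) ∈ S i := (σ i a).2.2
    rw [hS, Finsupp.mem_supported] at hmem
    by_contra h0
    exact hj (hmem (Finsupp.mem_support_iff.mpr h0))
  -- surjectivity
  have key : ∀ x : ι →₀ R, x ∈ M → ∃ z : ⨁ i, I i, ((Φ z : M) : ι →₀ R) = x := by
    intro x
    induction x using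
      ((InvImage.wf (fun x : ι →₀ R => x.support.max) wellFounded_lt).induction) with
    | _ x IH =>
    intro hxM
    by_cases hx0 : x = 0
    · exact ⟨0, by rw [map_zero]; simp [hx0]⟩
    · have hne : x.support.Nonempty := Finsupp.support_nonempty_iff.2 hx0
      set i := x.support.max' hne with hidef
      have hxS : x ∈ S i := by
        rw [hS, Finsupp.mem_supported]
        intro j hj
        exact Finset.le_max' _ j (Finset.mem_coe.mp hj)
      have hxi : x i ∈ I i := ⟨x, ⟨hxM, hxS⟩, rfl⟩
      set a : I i := ⟨x i, hxi⟩ with ha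
      set g : ι →₀ R := (σ i a : ι →₀ R) with hg
      have hgM : g ∈ M := (σ i a).2.1
      set y := x - g with hy
      have hyM : y ∈ M := sub_mem hxM hgM
      have hyi : y i = 0 := by
        rw [hy, Finsupp.sub_apply, hg, hσ i a, sub_self]
      have hysupp : ∀ j ∈ y.support, j < i := by
        intro j hj
        have hji : j ≤ i := by
          rcases Finset.mem_union.mp (Finsupp.support_sub hj) with h | h
          · exact Finset.le_max' _ j h
          · by_contra hc
            exact Finsupp.mem_support_iff.mp h (hσS i a j hc)
        exact lt_of_le_of_ne hji (fun h => Finsupp.mem_support_iff.mp hj (h ▸ hyi))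
      have hrel : y.support.max < x.support.max := by
        rw [← Finset.coe_max' hne, ← hidef]
        rcases hmax : y.support.max with _ | j
        · exact WithBot.bot_lt_coe _
        · exact WithBot.coe_lt_coe.mpr (hysupp j (Finset.mem_of_max hmax))
      obtain ⟨z, hz⟩ := IH y hrel hyM
      refine ⟨z + DirectSum.of _ i a, ?_⟩
      rw [map_add, Submodule.coe_add, hz, hΦof]
      rw [hy]
      exact sub_add_cancel x g
  have hsurj : Function.Surjective Φ := by
    rintro ⟨x, hx⟩
    obtain ⟨z, hz⟩ := key x hx
    exact ⟨z, Subtype.ext hz⟩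
  -- injectivity
  have hinj : Function.Injective Φ := by
    rw [injective_iff_map_eq_zero]
    intro z hz
    by_contra hz0
    have hne : z.support.Nonempty :=
      Finset.nonempty_iff_ne_empty.mpr (fun h => hz0 (DFinsupp.support_eq_empty.mp h))
    set i := z.support.max' hne with hidef
    have h1 : ((Φ z : M) : ι →₀ R) = ∑ j ∈ z.support, (σ j (z j) : ι →₀ R) := by
      conv_lhs => rw [← DirectSum.sum_support_of z]
      rw [map_sum]
      push_cast
      exact Finset.sum_congr rfl fun j _ => hΦof j (z j)
    have h2 := congrArg (fun f : ι →₀ R => f i) h1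
    rw [hz] at h2
    simp only [ZeroMemClass.coe_zero, Finsupp.coe_zero, Pi.zero_apply,
      Finsupp.finset_sum_apply] at h2
    rw [Finset.sum_eq_single i (fun j hj hji => hσS j (z j) i
        (fun hle => hji (le_antisymm (Finset.le_max' _ j hj) hle)))
      (fun hi => absurd (z.support.max'_mem hne) hi)] at h2
    have : (z i : R) = 0 := by rw [← hσ i (z i)]; exact h2.symm
    exact DFinsupp.mem_support_iff.mp (z.support.max'_mem hne)
      (Subtype.ext this)
  have : Module.Projective R (⨁ i, I i) := inferInstanceAs (Module.Projective R (Π₀ i, ↥(I i)))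
  exact Module.Projective.of_equiv (LinearEquiv.ofBijective Φ ⟨hinj, hsurj⟩)

theorem engine {ι : Type v} (d : ι → Γ)
    (H1 : ∀ I : Ideal R,
      (∀ x ∈ I, ∀ γ : Γ, ((DirectSum.decompose 𝒜 x γ : 𝒜 γ) : R) ∈ I) →
      Module.Projective R I)
    (M : Submodule R (ι →₀ R)) (hM : ∀ f ∈ M, ∀ γ : Γ, hcomp 𝒜 d γ f ∈ M) :
    Module.Projective R M := by
  obtain ⟨_, _⟩ := exists_wellOrder ι
  exact engine_ordered 𝒜 d H1 M hM

end Engine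

/-- For a unital `Γ`-graded ring `R` (`Γ` an abelian group) the following are equivalent:
(1) every homogeneous left ideal of `R` is projective as a left `R`-module;
(2) for every `Γ`-graded left `R`-module `P` that is projective as a left `R`-module,
every homogeneous submodule of `P` is projective as a left `R`-module.
(A submodule is homogeneous when it contains all homogeneous components of each of
its elements.) -/
theorem graded_hereditary_iff {Γ : Type w} [AddCommGroup Γ] [DecidableEq Γ]
    {R : Type u} [Ring R] (𝒜 : Γ → AddSubgroup R) [GradedRing 𝒜] :
    (∀ I : Ideal R,
        (∀ x ∈ I, ∀ γ : Γ, ((DirectSum.decompose 𝒜 x γ : 𝒜 γ) : R) ∈ I) →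
        Module.Projective R I) ↔
    (∀ (P : Type u) [AddCommGroup P] [Module R P] (ℳ : Γ → AddSubgroup P)
        [DirectSum.Decomposition ℳ],
        (∀ (γ δ : Γ), ∀ r ∈ 𝒜 γ, ∀ p ∈ ℳ δ, r • p ∈ ℳ (γ + δ)) →
        Module.Projective R P →
        ∀ N : Submodule R P,
          (∀ x ∈ N, ∀ γ : Γ, ((DirectSum.decompose ℳ x γ : ℳ γ) : P) ∈ N) →
          Module.Projective R N) := by
  constructor
  · intro H1 P _ _ ℳ _ hsm hP N hN
    classical
    haveI := hP
    obtain ⟨s, hs⟩ := Module.projective_lifting_property (gπ (R := R) ℳ) LinearMap.id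
      (gπ_surjective (R := R) ℳ)
    set t := hgzL 𝒜 ℳ hsm s with ht
    have hts : ∀ p, gπ (R := R) ℳ (t p) = p :=
      gπ_hgzL 𝒜 ℳ hsm s (fun p => LinearMap.ext_iff.mp hs p)
    have hinj : Function.Injective t := fun a b h => by rw [← hts a, ← hts b, h]
    have hhom : ∀ f ∈ N.map t, ∀ γ : Γ, hcomp 𝒜 (gdeg ℳ) γ f ∈ N.map t := by
      rintro f ⟨x, hxN, rfl⟩ γ
      rw [ht, hcomp_hgzL 𝒜 ℳ hsm s x γ]
      exact Submodule.mem_map_of_mem (hN x hxN γ)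
    haveI := engine 𝒜 (gdeg ℳ) H1 (N.map t) hhom
    exact Module.Projective.of_equiv (Submodule.equivMapOfInjective t hinj N).symm
  · intro H2 I hI
    exact H2 R 𝒜 (fun γ δ r hr p hp => by
        rw [smul_eq_mul]; exact SetLike.mul_mem_graded hr hp)
      inferInstance I hI
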